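/- The Pogorelov map Φ : H³ × H³ → ℝ³ × ℝ³, defined by Φ(x,y) = (2x⃗/(x₀+y₀), 2y⃗/(x₀+y₀)), is injective: if x, y, x', y' lie on the hyperboloid H³ and Φ(x,y) = Φ(x',y'), then x = x' and y = y'. -/
import Mathlib


noncomputable section

/-- Minkowski inner product on ℝ⁴: ⟨x,y⟩ = −x₀y₀ + x₁y₁ + x₂y₂ + x₃y₃. -/
def mink (x y : Fin 4 → ℝ) : ℝ :=
  -(x 0 * y 0) + x 1 * y 1 + x 2 * y 2 + x 3 * y 3

/-- The hyperboloid model of hyperbolic 3-space. -/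
def Hyp : Set (Fin 4 → ℝ) := {x | 0 < x 0 ∧ mink x x = -1}

/-- Spatial part x⃗ of x = (x₀, x⃗). -/
def spat (x : Fin 4 → ℝ) : Fin 3 → ℝ := fun i => x i.succ

/-- The Pogorelov map Φ(x,y) = (2x⃗/(x₀+y₀), 2y⃗/(x₀+y₀)). -/
def pog (x y : Fin 4 → ℝ) : (Fin 3 → ℝ) × (Fin 3 → ℝ) :=
  ((2 / (x 0 + y 0)) • spat x, (2 / (x 0 + y 0)) • spat y)

lemma pog_t_eq_one {a b t : ℝ} (ha : 0 ≤ a) (hb : 0 ≤ b) (ht : 0 < t)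
    (h : Real.sqrt (1 + t^2*a) + Real.sqrt (1 + t^2*b)
       = t * Real.sqrt (1 + a) + t * Real.sqrt (1 + b)) : t = 1 := by
  have key : ∀ c : ℝ, 0 ≤ c → t * Real.sqrt (1 + c) = Real.sqrt (t^2 + t^2*c) := by
    intro c hc
    rw [show t^2 + t^2*c = t^2 * (1+c) by ring, Real.sqrt_mul (sq_nonneg t),
        Real.sqrt_sq ht.le]
  rw [key a ha, key b hb] at h
  rcases lt_trichotomy t 1 with h1 | h1 | h1
  · exfalso
    have ht2 : t^2 < 1 := by nlinarith
    have h2 : Real.sqrt (t^2 + t^2*a) < Real.sqrt (1 + t^2*a) :=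
      Real.sqrt_lt_sqrt (by positivity) (by linarith)
    have h3 : Real.sqrt (t^2 + t^2*b) < Real.sqrt (1 + t^2*b) :=
      Real.sqrt_lt_sqrt (by positivity) (by linarith)
    linarith
  · exact h1
  · exfalso
    have ht2 : 1 < t^2 := by nlinarith
    have h2 : Real.sqrt (1 + t^2*a) < Real.sqrt (t^2 + t^2*a) :=
      Real.sqrt_lt_sqrt (by positivity) (by linarith)
    have h3 : Real.sqrt (1 + t^2*b) < Real.sqrt (t^2 + t^2*b) :=
      Real.sqrt_lt_sqrt (by positivity) (by linarith)
    linarith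

/-- The Pogorelov map is injective on H³ × H³. -/
theorem pogorelov_injective (x y x' y' : Fin 4 → ℝ)
    (hx : x ∈ Hyp) (hy : y ∈ Hyp) (hx' : x' ∈ Hyp) (hy' : y' ∈ Hyp)
    (h : pog x y = pog x' y') : x = x' ∧ y = y' := by
  obtain ⟨hx0, hxm⟩ := hx
  obtain ⟨hy0, hym⟩ := hy
  obtain ⟨hx'0, hx'm⟩ := hx'
  obtain ⟨hy'0, hy'm⟩ := hy'
  have hs : 0 < x 0 + y 0 := add_pos hx0 hy0
  have hs' : 0 < x' 0 + y' 0 := add_pos hx'0 hy'0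
  have h1 := congrFun (congrArg Prod.fst h)
  have h2 := congrFun (congrArg Prod.snd h)
  simp only [pog, Pi.smul_apply, smul_eq_mul, spat] at h1 h2
  set t : ℝ := (x' 0 + y' 0) / (x 0 + y 0) with ht_def
  have ht : 0 < t := div_pos hs' hs
  have hxj : ∀ i : Fin 3, x' i.succ = t * x i.succ := by
    intro i
    have h0 := h1 i
    field_simp at h0
    rw [ht_def]
    field_simp
    linarith
  have hyj : ∀ i : Fin 3, y' i.succ = t * y i.succ := by
    intro i
    have h0 := h2 i
    field_simp at h0
    rw [ht_def]
    field_simp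
    linarith
  have e0 : (0:Fin 3).succ = (1:Fin 4) := rfl
  have e1 : (1:Fin 3).succ = (2:Fin 4) := rfl
  have e2 : (2:Fin 3).succ = (3:Fin 4) := rfl
  have hx1 : x' 1 = t * x 1 := by have := hxj 0; rwa [e0] at this
  have hx2 : x' 2 = t * x 2 := by have := hxj 1; rwa [e1] at this
  have hx3 : x' 3 = t * x 3 := by have := hxj 2; rwa [e2] at this
  have hy1 : y' 1 = t * y 1 := by have := hyj 0; rwa [e0] at this
  have hy2 : y' 2 = t * y 2 := by have := hyj 1; rwa [e1] at this
  have hy3 : y' 3 = t * y 3 := by have := hyj 2; rwa [e2] at this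
  set A : ℝ := x 1 ^ 2 + x 2 ^ 2 + x 3 ^ 2 with hA_def
  set B : ℝ := y 1 ^ 2 + y 2 ^ 2 + y 3 ^ 2 with hB_def
  have hA : 0 ≤ A := by positivity
  have hB : 0 ≤ B := by positivity
  simp only [mink] at hxm hym hx'm hy'm
  rw [hx1, hx2, hx3] at hx'm
  rw [hy1, hy2, hy3] at hy'm
  have hx0sq : x 0 ^ 2 = 1 + A := by rw [hA_def]; linear_combination -hxm
  have hy0sq : y 0 ^ 2 = 1 + B := by rw [hB_def]; linear_combination -hym
  have hx'0sq : x' 0 ^ 2 = 1 + t^2 * A := by rw [hA_def]; linear_combination -hx'm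
  have hy'0sq : y' 0 ^ 2 = 1 + t^2 * B := by rw [hB_def]; linear_combination -hy'm
  have sx : Real.sqrt (1 + A) = x 0 := by rw [← hx0sq, Real.sqrt_sq hx0.le]
  have sy : Real.sqrt (1 + B) = y 0 := by rw [← hy0sq, Real.sqrt_sq hy0.le]
  have sx' : Real.sqrt (1 + t^2*A) = x' 0 := by rw [← hx'0sq, Real.sqrt_sq hx'0.le]
  have sy' : Real.sqrt (1 + t^2*B) = y' 0 := by rw [← hy'0sq, Real.sqrt_sq hy'0.le]
  have hts : x' 0 + y' 0 = t * (x 0 + y 0) := by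
    rw [ht_def]; field_simp
  have heq : Real.sqrt (1 + t^2*A) + Real.sqrt (1 + t^2*B)
      = t * Real.sqrt (1 + A) + t * Real.sqrt (1 + B) := by
    rw [sx, sy, sx', sy']; linarith [hts]
  have ht1 : t = 1 := pog_t_eq_one hA hB ht heq
  rw [ht1] at hx1 hx2 hx3 hy1 hy2 hy3 hx'0sq hy'0sq
  have hsq : x' 0 ^ 2 = x 0 ^ 2 := by rw [hx0sq, hx'0sq]; ring
  have hx00 : x' 0 = x 0 := by rw [← Real.sqrt_sq hx'0.le, hsq, Real.sqrt_sq hx0.le]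
  have hsq' : y' 0 ^ 2 = y 0 ^ 2 := by rw [hy0sq, hy'0sq]; ring
  have hy00 : y' 0 = y 0 := by rw [← Real.sqrt_sq hy'0.le, hsq', Real.sqrt_sq hy0.le]
  constructor
  · funext j
    fin_cases j
    · exact hx00.symm
    · simpa using hx1.symm
    · simpa using hx2.symm
    · simpa using hx3.symm
  · funext j
    fin_cases j
    · exact hy00.symm
    · simpa using hy1.symm
    · simpa using hy2.symm
    · simpa using hy3.symm
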